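/- The Pogorelov map Φ : H³ × H³ → ℝ³ × ℝ³, with H³ × H³ carrying the subspace topology from ℝ⁴ × ℝ⁴, is a topological embedding, i.e. it is injective, continuous, and a homeomorphism onto its image. -/

import Mathlib

noncomputable section

/-- Minkowski inner product on ℝ⁴: ⟨x,y⟩ = −x₀y₀ + x₁y₁ + x₂y₂ + x₃y₃. -/
def mink (x y : Fin 4 → ℝ) : ℝ :=
  -(x 0 * y 0) + x 1 * y 1 + x 2 * y 2 + x 3 * y 3

/-- The hyperboloid model of hyperbolic 3-space. -/
def Hyp : Set (Fin 4 → ℝ) := {x | 0 < x 0 ∧ mink x x = -1}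

/-- Spatial part x⃗ of x = (x₀, x⃗). -/
def spat (x : Fin 4 → ℝ) : Fin 3 → ℝ := fun i => x i.succ

/-- The Pogorelov map Φ(x,y) = (2x⃗/(x₀+y₀), 2y⃗/(x₀+y₀)). -/
def pog (x y : Fin 4 → ℝ) : (Fin 3 → ℝ) × (Fin 3 → ℝ) :=
  ((2 / (x 0 + y 0)) • spat x, (2 / (x 0 + y 0)) • spat y)

/-- The Pogorelov map, as a map from H³ × H³ (with the subspace topology from
ℝ⁴ × ℝ⁴) to ℝ³ × ℝ³. -/
def pogSub (p : Hyp × Hyp) : (Fin 3 → ℝ) × (Fin 3 → ℝ) :=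
  pog p.1.1 p.2.1

namespace PogAux

def nsq (u : Fin 3 → ℝ) : ℝ := u 0 * u 0 + u 1 * u 1 + u 2 * u 2

def aF (p : (Fin 3 → ℝ) × (Fin 3 → ℝ)) : ℝ := (nsq p.1 - nsq p.2 + 4) / 8

def tF (p : (Fin 3 → ℝ) × (Fin 3 → ℝ)) : ℝ := 4 * aF p ^ 2 - nsq p.1

def U : Set ((Fin 3 → ℝ) × (Fin 3 → ℝ)) := {p | 0 < tF p}

def gmap (p : U) : (Fin 4 → ℝ) × (Fin 4 → ℝ) :=
  (Fin.cons (2 * aF p.1 / Real.sqrt (tF p.1)) (fun i => p.1.1 i / Real.sqrt (tF p.1)),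
   Fin.cons (2 * (1 - aF p.1) / Real.sqrt (tF p.1)) (fun i => p.1.2 i / Real.sqrt (tF p.1)))

lemma continuous_nsq : Continuous nsq := by
  unfold nsq; fun_prop

lemma continuous_aF : Continuous aF := by
  unfold aF
  exact (((continuous_nsq.comp continuous_fst).sub
    (continuous_nsq.comp continuous_snd)).add continuous_const).div_const 8

lemma continuous_tF : Continuous tF := by
  unfold tF
  exact (continuous_const.mul (continuous_aF.pow 2)).sub (continuous_nsq.comp continuous_fst)

lemma one_le_x0 {x : Fin 4 → ℝ} (hx : x ∈ Hyp) : 1 ≤ x 0 := by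
  have h := hx.2
  have h0 := hx.1
  simp only [mink] at h
  nlinarith [sq_nonneg (x 1), sq_nonneg (x 2), sq_nonneg (x 3), sq_nonneg (x 0 - 1)]

lemma nsq_spat {x : Fin 4 → ℝ} (hx : x ∈ Hyp) : nsq (spat x) = x 0 ^ 2 - 1 := by
  have h := hx.2
  simp only [mink] at h
  simp only [nsq, spat, show (0 : Fin 3).succ = 1 from rfl, show (1 : Fin 3).succ = 2 from rfl,
    show (2 : Fin 3).succ = 3 from rfl]
  nlinarith [h]

lemma nsq_smul (c : ℝ) (u : Fin 3 → ℝ) : nsq (c • u) = c ^ 2 * nsq u := by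
  simp only [nsq, Pi.smul_apply, smul_eq_mul]; ring

lemma aF_pog {x y : Fin 4 → ℝ} (hx : x ∈ Hyp) (hy : y ∈ Hyp) :
    aF (pog x y) = x 0 / (x 0 + y 0) := by
  have hs : (0:ℝ) < x 0 + y 0 := by linarith [one_le_x0 hx, one_le_x0 hy]
  simp only [aF, pog, nsq_smul, nsq_spat hx, nsq_spat hy]
  field_simp
  ring

lemma tF_pog {x y : Fin 4 → ℝ} (hx : x ∈ Hyp) (hy : y ∈ Hyp) :
    tF (pog x y) = 4 / (x 0 + y 0) ^ 2 := by
  have hs : (0:ℝ) < x 0 + y 0 := by linarith [one_le_x0 hx, one_le_x0 hy]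
  simp only [tF]
  rw [aF_pog hx hy]
  simp only [pog, nsq_smul, nsq_spat hx]
  rw [eq_div_iff (by positivity : ((x 0 + y 0) ^ 2 : ℝ) ≠ 0)]
  field_simp
  ring

lemma sqrt_tF_pog {x y : Fin 4 → ℝ} (hx : x ∈ Hyp) (hy : y ∈ Hyp) :
    Real.sqrt (tF (pog x y)) = 2 / (x 0 + y 0) := by
  have hs : (0:ℝ) < x 0 + y 0 := by linarith [one_le_x0 hx, one_le_x0 hy]
  rw [tF_pog hx hy, show (4:ℝ) / (x 0 + y 0) ^ 2 = (2 / (x 0 + y 0)) ^ 2 by rw [div_pow]; norm_num,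
    Real.sqrt_sq (by positivity)]

lemma mem_U {x y : Fin 4 → ℝ} (hx : x ∈ Hyp) (hy : y ∈ Hyp) : pog x y ∈ U := by
  have hs : (0:ℝ) < x 0 + y 0 := by linarith [one_le_x0 hx, one_le_x0 hy]
  simp only [U, Set.mem_setOf_eq, tF_pog hx hy]
  positivity

lemma continuous_gmap : Continuous gmap := by
  have hden : ∀ p : U, Real.sqrt (tF p.1) ≠ 0 := fun p =>
    ne_of_gt (Real.sqrt_pos.mpr p.2)
  have hct : Continuous fun p : U => Real.sqrt (tF p.1) :=
    Real.continuous_sqrt.comp (continuous_tF.comp continuous_subtype_val)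
  apply Continuous.prodMk
  · apply continuous_pi
    intro i
    refine Fin.cases ?_ ?_ i
    · simp only [Fin.cons_zero]
      exact (continuous_const.mul ((continuous_aF.comp continuous_subtype_val))).div hct hden
    · intro j
      simp only [Fin.cons_succ]
      exact ((continuous_apply j).comp (continuous_fst.comp continuous_subtype_val)).div hct hden
  · apply continuous_pi
    intro i
    refine Fin.cases ?_ ?_ i
    · simp only [Fin.cons_zero]
      exact (continuous_const.mul (continuous_const.sub
        (continuous_aF.comp continuous_subtype_val))).div hct hden
    · intro j
      simp only [Fin.cons_succ]
      exact ((continuous_apply j).comp (continuous_snd.comp continuous_subtype_val)).div hct hden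

lemma gmap_pog {x y : Fin 4 → ℝ} (hx : x ∈ Hyp) (hy : y ∈ Hyp) :
    gmap ⟨pog x y, mem_U hx hy⟩ = (x, y) := by
  have hs : (0:ℝ) < x 0 + y 0 := by linarith [one_le_x0 hx, one_le_x0 hy]
  have hs' : x 0 + y 0 ≠ 0 := ne_of_gt hs
  simp only [gmap]
  rw [sqrt_tF_pog hx hy, aF_pog hx hy]
  simp only [pog, Pi.smul_apply, smul_eq_mul]
  refine Prod.ext ?_ ?_ <;> simp only []
  · funext i
    refine Fin.cases ?_ ?_ i
    · simp only [Fin.cons_zero]; field_simp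
    · intro j
      simp only [Fin.cons_succ, spat]
      field_simp
  · funext i
    refine Fin.cases ?_ ?_ i
    · simp only [Fin.cons_zero]; field_simp; ring
    · intro j
      simp only [Fin.cons_succ, spat]
      field_simp

end PogAux

open PogAux in
/-- The Pogorelov map is a topological embedding: injective, continuous, and a
homeomorphism onto its image. -/
theorem pogorelov_isEmbedding : Topology.IsEmbedding pogSub := by
  have hmem : ∀ p : Hyp × Hyp, pogSub p ∈ U := fun p => mem_U p.1.2 p.2.2
  set f' : Hyp × Hyp → U := fun p => ⟨pogSub p, hmem p⟩ with hf'def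
  have hcont_pog : Continuous pogSub := by
    have hd : ∀ p : Hyp × Hyp, p.1.1 0 + p.2.1 0 ≠ 0 := fun p =>
      ne_of_gt (by linarith [one_le_x0 p.1.2, one_le_x0 p.2.2])
    have c1 : Continuous fun p : Hyp × Hyp => p.1.1 0 + p.2.1 0 :=
      ((continuous_apply 0).comp (continuous_subtype_val.comp continuous_fst)).add
        ((continuous_apply 0).comp (continuous_subtype_val.comp continuous_snd))
    have cdiv : Continuous fun p : Hyp × Hyp => 2 / (p.1.1 0 + p.2.1 0) :=
      continuous_const.div c1 hd
    have cs1 : Continuous fun p : Hyp × Hyp => spat p.1.1 :=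
      continuous_pi fun i => (continuous_apply i.succ).comp
        (continuous_subtype_val.comp continuous_fst)
    have cs2 : Continuous fun p : Hyp × Hyp => spat p.2.1 :=
      continuous_pi fun i => (continuous_apply i.succ).comp
        (continuous_subtype_val.comp continuous_snd)
    exact (cdiv.smul cs1).prodMk (cdiv.smul cs2)
  have hcont_f' : Continuous f' := hcont_pog.subtype_mk _
  have hcomp : gmap ∘ f' = fun p : Hyp × Hyp => ((p.1 : Fin 4 → ℝ), (p.2 : Fin 4 → ℝ)) := by
    funext p
    exact gmap_pog p.1.2 p.2.2
  have hincl : Topology.IsEmbedding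
      fun p : Hyp × Hyp => ((p.1 : Fin 4 → ℝ), (p.2 : Fin 4 → ℝ)) :=
    Topology.IsEmbedding.subtypeVal.prodMap Topology.IsEmbedding.subtypeVal
  have hf' : Topology.IsEmbedding f' :=
    Topology.IsEmbedding.of_comp hcont_f' continuous_gmap (hcomp ▸ hincl)
  have : pogSub = Subtype.val ∘ f' := rfl
  rw [this]
  exact Topology.IsEmbedding.subtypeVal.comp hf'
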